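/- For all positive integers n, m and every natural number k ≥ 1, one has n ≡ m (mod 2^k) if and only if T^{(i)}(n) ≡ T^{(i)}(m) (mod 2) for all i with 0 ≤ i < k. In other words, the length-k parity vector (n, T(n), ..., T^{(k-1)}(n)) mod 2 depends only on, and determines, the residue class of n modulo 2^k. -/
import Mathlib


/-- The Collatz map: `T n = (3n+1)/2` if `n` is odd, `n/2` if `n` is even. -/
def T (n : ℕ) : ℕ := if n % 2 = 1 then (3 * n + 1) / 2 else n / 2

lemma mod_two_pow_succ (n k : ℕ) : n % 2 ^ (k+1) = n % 2 + 2 * (n / 2 % 2 ^ k) := by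
  rw [pow_succ']; exact Nat.mod_mul

lemma step (k n m : ℕ) :
    n % 2 ^ (k+1) = m % 2 ^ (k+1) ↔ n % 2 = m % 2 ∧ T n % 2 ^ k = T m % 2 ^ k := by
  constructor
  · intro h
    have hp : n % 2 = m % 2 := by
      have h1 := mod_two_pow_succ n k
      have h2 := mod_two_pow_succ m k
      have b1 : n % 2 < 2 := Nat.mod_lt _ (by norm_num)
      have b2 : m % 2 < 2 := Nat.mod_lt _ (by norm_num)
      omega
    refine ⟨hp, ?_⟩
    rcases Nat.mod_two_eq_zero_or_one n with h0 | h0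
    · have tn : T n = n / 2 := by simp [T, h0]
      have tm : T m = m / 2 := by simp [T, hp ▸ h0]
      rw [tn, tm]
      have h1 := mod_two_pow_succ n k
      have h2 := mod_two_pow_succ m k
      omega
    · have tn : T n = (3*n+1) / 2 := by simp [T, h0]
      have tm : T m = (3*m+1) / 2 := by simp [T, hp ▸ h0]
      rw [tn, tm]
      have h3 : (3*n+1) % 2 ^ (k+1) = (3*m+1) % 2 ^ (k+1) :=
        ((show Nat.ModEq (2^(k+1)) n m from h).mul_left 3).add_right 1
      have h1 := mod_two_pow_succ (3*n+1) k
      have h2 := mod_two_pow_succ (3*m+1) k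
      have e1 : (3*n+1) % 2 = 0 := by omega
      have e2 : (3*m+1) % 2 = 0 := by omega
      omega
  · rintro ⟨hp, ht⟩
    rcases Nat.mod_two_eq_zero_or_one n with h0 | h0
    · have tn : T n = n / 2 := by simp [T, h0]
      have tm : T m = m / 2 := by simp [T, hp ▸ h0]
      rw [tn, tm] at ht
      have h1 := mod_two_pow_succ n k
      have h2 := mod_two_pow_succ m k
      omega
    · have tn : T n = (3*n+1) / 2 := by simp [T, h0]
      have tm : T m = (3*m+1) / 2 := by simp [T, hp ▸ h0]
      rw [tn, tm] at ht
      have h1 := mod_two_pow_succ (3*n+1) k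
      have h2 := mod_two_pow_succ (3*m+1) k
      have e1 : (3*n+1) % 2 = 0 := by omega
      have e2 : (3*m+1) % 2 = 0 := by omega
      have h3 : Nat.ModEq (2^(k+1)) (3*n+1) (3*m+1) := by
        show (3*n+1) % 2^(k+1) = (3*m+1) % 2^(k+1); omega
      have h4 : Nat.ModEq (2^(k+1)) (3*n) (3*m) := Nat.ModEq.add_right_cancel' 1 h3
      have hc : Nat.Coprime 3 (2^(k+1)) := Nat.Coprime.pow_right _ (by decide)
      exact Nat.ModEq.cancel_left_of_coprime (by simpa [Nat.Coprime] using hc) h4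

lemma aux (k : ℕ) : ∀ n m : ℕ,
    n % 2 ^ (k+1) = m % 2 ^ (k+1) ↔ ∀ i < k+1, T^[i] n % 2 = T^[i] m % 2 := by
  induction k with
  | zero => intro n m; simp
  | succ k ih =>
    intro n m
    rw [step (k+1) n m, ih (T n) (T m)]
    constructor
    · rintro ⟨hp, h⟩ i hi
      cases i with
      | zero => simpa using hp
      | succ j =>
        rw [Function.iterate_succ_apply, Function.iterate_succ_apply]
        exact h j (by omega)
    · intro h
      refine ⟨by simpa using h 0 (by omega), fun i hi => ?_⟩
      have := h (i+1) (by omega)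
      rwa [Function.iterate_succ_apply, Function.iterate_succ_apply] at this

/-- For positive integers `n, m` and `k ≥ 1`: `n ≡ m (mod 2^k)` iff
`T^[i] n ≡ T^[i] m (mod 2)` for all `i < k`. -/
theorem stmt_1 (n m : ℕ) (hn : 0 < n) (hm : 0 < m) (k : ℕ) (hk : 1 ≤ k) :
    n % 2 ^ k = m % 2 ^ k ↔ ∀ i < k, T^[i] n % 2 = T^[i] m % 2 := by
  obtain ⟨j, rfl⟩ : ∃ j, k = j + 1 := ⟨k - 1, by omega⟩
  exact aux j n m
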